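/- Gradient bound for the trilinear form in three dimensions: Let D be a bounded measurable subset of ℝ³. There exists a constant C > 0, depending only on D, such that for all continuously differentiable compactly supported vector fields u, v, w : ℝ³ → ℝ³ whose supports are contained in D, one has |b*(u,v,w)| ≤ C · ‖Du‖_{L²} · ‖Dv‖_{L²} · ‖Dw‖_{L²}. -/

import Mathlib

open MeasureTheory
open scoped RealInnerProductSpace ENNReal NNReal

/-- The convective term `u·∇v`, i.e. `x ↦ Dv(x)(u(x))`. -/
noncomputable def convTerm {d : ℕ}
    (u v : EuclideanSpace ℝ (Fin d) → EuclideanSpace ℝ (Fin d)) :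
    EuclideanSpace ℝ (Fin d) → EuclideanSpace ℝ (Fin d) :=
  fun x => fderiv ℝ v x (u x)

/-- The L² inner product `(f, g) = ∫ f(x)·g(x) dx` of two vector fields. -/
noncomputable def l2inner {d : ℕ}
    (f g : EuclideanSpace ℝ (Fin d) → EuclideanSpace ℝ (Fin d)) : ℝ :=
  ∫ x, ⟪f x, g x⟫

/-- The skew-symmetric trilinear form `b*(u,v,w) = ½(u·∇v, w) − ½(u·∇w, v)`. -/
noncomputable def bstar {d : ℕ}
    (u v w : EuclideanSpace ℝ (Fin d) → EuclideanSpace ℝ (Fin d)) : ℝ :=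
  (1 / 2) * l2inner (convTerm u v) w - (1 / 2) * l2inner (convTerm u w) v

/-- The Frobenius norm of the Jacobian matrix of `v` at `x`:
`(∑ i ‖Dv(x) eᵢ‖²)^{1/2} = (∑ i ∑ j (∂vⱼ/∂xᵢ)²)^{1/2}`. -/
noncomputable def frobNorm {d : ℕ}
    (v : EuclideanSpace ℝ (Fin d) → EuclideanSpace ℝ (Fin d))
    (x : EuclideanSpace ℝ (Fin d)) : ℝ :=
  Real.sqrt (∑ i : Fin d, ‖fderiv ℝ v x (EuclideanSpace.single i 1)‖ ^ 2)

/-- `‖Dv‖_{L²}`: the L² norm over `ℝ^d` of `x ↦ ‖Dv(x)‖_F`. -/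
noncomputable def gradL2 {d : ℕ}
    (v : EuclideanSpace ℝ (Fin d) → EuclideanSpace ℝ (Fin d)) : ℝ :=
  (eLpNorm (fun x => frobNorm v x) 2 volume).toReal


section Aux

open ENNReal

/-- Operator norm is bounded by the Frobenius norm. -/
lemma opNorm_le_frob {d : ℕ} (A : EuclideanSpace ℝ (Fin d) →L[ℝ] EuclideanSpace ℝ (Fin d)) :
    ‖A‖ ≤ Real.sqrt (∑ i : Fin d, ‖A (EuclideanSpace.single i 1)‖ ^ 2) := by
  refine A.opNorm_le_bound (Real.sqrt_nonneg _) (fun y => ?_)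
  have hy : (∑ i : Fin d, y i • EuclideanSpace.single (𝕜 := ℝ) i (1:ℝ)) = y := by
    have := (EuclideanSpace.basisFun (Fin d) ℝ).sum_repr y
    simpa [EuclideanSpace.basisFun_apply, EuclideanSpace.basisFun_repr] using this
  have hCS : (∑ i : Fin d, ‖y i‖ * ‖A (EuclideanSpace.single i 1)‖) ≤
      Real.sqrt (∑ i : Fin d, ‖y i‖ ^ 2) *
      Real.sqrt (∑ i : Fin d, ‖A (EuclideanSpace.single i 1)‖ ^ 2) := by
    rw [← Real.sqrt_mul (by positivity)]
    have h1 := Finset.sum_mul_sq_le_sq_mul_sq Finset.univ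
      (fun i => ‖y i‖) (fun i => ‖A (EuclideanSpace.single i 1)‖)
    have h2 := Real.sqrt_le_sqrt h1
    rwa [Real.sqrt_sq (by positivity)] at h2
  calc ‖A y‖ = ‖∑ i : Fin d, y i • A (EuclideanSpace.single i 1)‖ := by
        conv_lhs => rw [← hy]
        rw [map_sum]
        simp only [A.map_smul]
    _ ≤ ∑ i : Fin d, ‖y i‖ * ‖A (EuclideanSpace.single i 1)‖ := by
        refine (norm_sum_le _ _).trans_eq ?_
        simp [norm_smul]
    _ ≤ _ := hCS
    _ = Real.sqrt (∑ i : Fin d, ‖A (EuclideanSpace.single i 1)‖ ^ 2) * ‖y‖ := by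
        rw [EuclideanSpace.norm_eq, mul_comm]

lemma frobNorm_nonneg {d : ℕ} (v : EuclideanSpace ℝ (Fin d) → EuclideanSpace ℝ (Fin d))
    (x : EuclideanSpace ℝ (Fin d)) : 0 ≤ frobNorm v x := Real.sqrt_nonneg _

lemma fderiv_opNorm_le_frobNorm {d : ℕ}
    (v : EuclideanSpace ℝ (Fin d) → EuclideanSpace ℝ (Fin d)) (x : EuclideanSpace ℝ (Fin d)) :
    ‖fderiv ℝ v x‖ ≤ frobNorm v x := opNorm_le_frob _

lemma frobNorm_continuous {d : ℕ} {v : EuclideanSpace ℝ (Fin d) → EuclideanSpace ℝ (Fin d)}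
    (hv : ContDiff ℝ 1 v) : Continuous (frobNorm v) := by
  have hcf : Continuous (fderiv ℝ v) := (hv.fderiv_right (m := 0) le_rfl).continuous
  unfold frobNorm
  fun_prop

lemma frobNorm_hasCompactSupport {d : ℕ}
    {v : EuclideanSpace ℝ (Fin d) → EuclideanSpace ℝ (Fin d)}
    (hv : HasCompactSupport v) : HasCompactSupport (frobNorm v) := by
  have h := hv.fderiv (𝕜 := ℝ)
  have heq : frobNorm v = (fun A : EuclideanSpace ℝ (Fin d) →L[ℝ] EuclideanSpace ℝ (Fin d) =>
      Real.sqrt (∑ i : Fin d, ‖A (EuclideanSpace.single i 1)‖ ^ 2)) ∘ (fderiv ℝ v) := rfl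
  rw [heq]
  exact h.comp_left (by simp)

/-- Triple Hölder inequality with exponents 4, 2, 4. -/
lemma triple_holder {α : Type*} [MeasurableSpace α] (μ : Measure α)
    {f g h : α → ℝ≥0∞} (hf : AEMeasurable f μ) (hg : AEMeasurable g μ)
    (hh : AEMeasurable h μ) :
    ∫⁻ x, f x * g x * h x ∂μ ≤
      (∫⁻ x, f x ^ (4 : ℝ) ∂μ) ^ ((1:ℝ)/4) * (∫⁻ x, g x ^ (2 : ℝ) ∂μ) ^ ((1:ℝ)/2) *
        (∫⁻ x, h x ^ (4 : ℝ) ∂μ) ^ ((1:ℝ)/4) := by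
  have h22 : Real.HolderConjugate 2 2 := Real.HolderConjugate.two_two
  have step1 : ∫⁻ x, f x * g x * h x ∂μ ≤
      (∫⁻ x, (f x * h x) ^ (2:ℝ) ∂μ) ^ ((1:ℝ)/2) * (∫⁻ x, g x ^ (2:ℝ) ∂μ) ^ ((1:ℝ)/2) := by
    have := ENNReal.lintegral_mul_le_Lp_mul_Lq μ h22 (hf.mul hh) hg
    refine le_trans (le_of_eq ?_) this
    congr 1; ext x; simp [Pi.mul_apply]; ring
  have step2 : ∫⁻ x, (f x * h x) ^ (2:ℝ) ∂μ ≤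
      (∫⁻ x, f x ^ (4:ℝ) ∂μ) ^ ((1:ℝ)/2) * (∫⁻ x, h x ^ (4:ℝ) ∂μ) ^ ((1:ℝ)/2) := by
    have hmeas : AEMeasurable (fun x => f x ^ (2:ℝ)) μ := hf.pow_const _
    have hmeas' : AEMeasurable (fun x => h x ^ (2:ℝ)) μ := hh.pow_const _
    have := ENNReal.lintegral_mul_le_Lp_mul_Lq μ h22 hmeas hmeas'
    calc ∫⁻ x, (f x * h x) ^ (2:ℝ) ∂μ
        = ∫⁻ x, ((fun x => f x ^ (2:ℝ)) * fun x => h x ^ (2:ℝ)) x ∂μ := by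
          congr 1; ext x
          simp [ENNReal.mul_rpow_of_nonneg _ _ (by norm_num : (0:ℝ) ≤ 2)]
      _ ≤ (∫⁻ x, (f x ^ (2:ℝ)) ^ (2:ℝ) ∂μ) ^ ((1:ℝ)/2) *
          (∫⁻ x, (h x ^ (2:ℝ)) ^ (2:ℝ) ∂μ) ^ ((1:ℝ)/2) := this
      _ = _ := by
          congr 1 <;> refine congrArg (· ^ ((1:ℝ)/2)) (lintegral_congr fun x => ?_) <;>
            (rw [← ENNReal.rpow_mul]; norm_num)
  calc ∫⁻ x, f x * g x * h x ∂μ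
      ≤ (∫⁻ x, (f x * h x) ^ (2:ℝ) ∂μ) ^ ((1:ℝ)/2) * (∫⁻ x, g x ^ (2:ℝ) ∂μ) ^ ((1:ℝ)/2) := step1
    _ ≤ ((∫⁻ x, f x ^ (4:ℝ) ∂μ) ^ ((1:ℝ)/2) * (∫⁻ x, h x ^ (4:ℝ) ∂μ) ^ ((1:ℝ)/2)) ^ ((1:ℝ)/2) *
        (∫⁻ x, g x ^ (2:ℝ) ∂μ) ^ ((1:ℝ)/2) := by
        gcongr
    _ = _ := by
        rw [ENNReal.mul_rpow_of_nonneg _ _ (by norm_num : (0:ℝ) ≤ 1/2),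
          ← ENNReal.rpow_mul, ← ENNReal.rpow_mul]
        norm_num
        ring

lemma eLpNorm_four_eq {d : ℕ} (u : EuclideanSpace ℝ (Fin d) → EuclideanSpace ℝ (Fin d)) :
    eLpNorm u 4 volume = (∫⁻ x, (‖u x‖₊ : ℝ≥0∞) ^ (4:ℝ)) ^ ((1:ℝ)/4) := by
  rw [eLpNorm_eq_lintegral_rpow_enorm_toReal (by norm_num) (by norm_num)]
  norm_num [enorm_eq_nnnorm]

lemma eLpNorm_two_eq {d : ℕ} (f : EuclideanSpace ℝ (Fin d) → ℝ) :
    eLpNorm f 2 volume = (∫⁻ x, (‖f x‖₊ : ℝ≥0∞) ^ (2:ℝ)) ^ ((1:ℝ)/2) := by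
  rw [eLpNorm_eq_lintegral_rpow_enorm_toReal (by norm_num) (by norm_num)]
  norm_num [enorm_eq_nnnorm]

/-- Core estimate: `|(u·∇v, w)| ≤ ‖u‖_{L⁴} ‖Dv‖_{L²} ‖w‖_{L⁴}`. -/
lemma core_estimate {d : ℕ}
    {u v w : EuclideanSpace ℝ (Fin d) → EuclideanSpace ℝ (Fin d)}
    (hu : ContDiff ℝ 1 u) (hv : ContDiff ℝ 1 v) (hw : ContDiff ℝ 1 w) :
    ENNReal.ofReal |l2inner (convTerm u v) w| ≤
      eLpNorm u 4 volume * eLpNorm (frobNorm v) 2 volume * eLpNorm w 4 volume := by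
  have habs : |l2inner (convTerm u v) w| ≤
      (∫⁻ x, ENNReal.ofReal ‖⟪convTerm u v x, w x⟫‖).toReal := by
    rw [← Real.norm_eq_abs]
    exact norm_integral_le_lintegral_norm _
  have h1 : ENNReal.ofReal |l2inner (convTerm u v) w| ≤
      ∫⁻ x, ENNReal.ofReal ‖⟪convTerm u v x, w x⟫‖ := by
    refine (ENNReal.ofReal_le_ofReal habs).trans ENNReal.ofReal_toReal_le
  have hpt : ∀ x, ENNReal.ofReal ‖⟪convTerm u v x, w x⟫‖ ≤
      (‖u x‖₊ : ℝ≥0∞) * (‖frobNorm v x‖₊ : ℝ≥0∞) * (‖w x‖₊ : ℝ≥0∞) := by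
    intro x
    have hr : ‖⟪convTerm u v x, w x⟫‖ ≤ ‖u x‖ * frobNorm v x * ‖w x‖ := by
      have h2 : ‖convTerm u v x‖ ≤ frobNorm v x * ‖u x‖ :=
        ((fderiv ℝ v x).le_opNorm (u x)).trans
          (mul_le_mul_of_nonneg_right (fderiv_opNorm_le_frobNorm v x) (norm_nonneg _))
      calc ‖⟪convTerm u v x, w x⟫‖ ≤ ‖convTerm u v x‖ * ‖w x‖ := norm_inner_le_norm _ _
        _ ≤ (frobNorm v x * ‖u x‖) * ‖w x‖ :=
            mul_le_mul_of_nonneg_right h2 (norm_nonneg _)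
        _ = ‖u x‖ * frobNorm v x * ‖w x‖ := by ring
    calc ENNReal.ofReal ‖⟪convTerm u v x, w x⟫‖
        ≤ ENNReal.ofReal (‖u x‖ * frobNorm v x * ‖w x‖) := ENNReal.ofReal_le_ofReal hr
      _ = ENNReal.ofReal (‖u x‖ * ‖frobNorm v x‖ * ‖w x‖) := by
          rw [Real.norm_of_nonneg (frobNorm_nonneg v x)]
      _ = (‖u x‖₊ : ℝ≥0∞) * (‖frobNorm v x‖₊ : ℝ≥0∞) * (‖w x‖₊ : ℝ≥0∞) := by
          rw [ENNReal.ofReal_mul (by positivity), ENNReal.ofReal_mul (by positivity),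
            ofReal_norm, ofReal_norm, ofReal_norm, enorm_eq_nnnorm, enorm_eq_nnnorm, enorm_eq_nnnorm]
  have hfm : AEMeasurable (fun x => (‖u x‖₊ : ℝ≥0∞))
      (volume : Measure (EuclideanSpace ℝ (Fin d))) :=
    (hu.continuous.measurable.nnnorm.coe_nnreal_ennreal).aemeasurable
  have hgm : AEMeasurable (fun x => (‖frobNorm v x‖₊ : ℝ≥0∞))
      (volume : Measure (EuclideanSpace ℝ (Fin d))) :=
    ((frobNorm_continuous hv).measurable.nnnorm.coe_nnreal_ennreal).aemeasurable
  have hhm : AEMeasurable (fun x => (‖w x‖₊ : ℝ≥0∞))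
      (volume : Measure (EuclideanSpace ℝ (Fin d))) :=
    (hw.continuous.measurable.nnnorm.coe_nnreal_ennreal).aemeasurable
  calc ENNReal.ofReal |l2inner (convTerm u v) w|
      ≤ ∫⁻ x, ENNReal.ofReal ‖⟪convTerm u v x, w x⟫‖ := h1
    _ ≤ ∫⁻ x, (‖u x‖₊ : ℝ≥0∞) * (‖frobNorm v x‖₊ : ℝ≥0∞) * (‖w x‖₊ : ℝ≥0∞) :=
        lintegral_mono hpt
    _ ≤ (∫⁻ x, (‖u x‖₊ : ℝ≥0∞) ^ (4:ℝ)) ^ ((1:ℝ)/4) *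
        (∫⁻ x, (‖frobNorm v x‖₊ : ℝ≥0∞) ^ (2:ℝ)) ^ ((1:ℝ)/2) *
        (∫⁻ x, (‖w x‖₊ : ℝ≥0∞) ^ (4:ℝ)) ^ ((1:ℝ)/4) := triple_holder _ hfm hgm hhm
    _ = eLpNorm u 4 volume * eLpNorm (frobNorm v) 2 volume * eLpNorm w 4 volume := by
        rw [eLpNorm_four_eq, eLpNorm_two_eq, eLpNorm_four_eq]

/-- Sobolev embedding step in 3d. -/
lemma sobolev_step (D : Set (EuclideanSpace ℝ (Fin 3))) (hD : Bornology.IsBounded D)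
    {u : EuclideanSpace ℝ (Fin 3) → EuclideanSpace ℝ (Fin 3)}
    (hu : ContDiff ℝ 1 u) (hsupp : Function.support u ⊆ D) :
    eLpNorm u 4 volume ≤
      (eLpNormLESNormFDerivOfLeConst (EuclideanSpace ℝ (Fin 3)) volume D 2 4 : ℝ≥0∞) *
        eLpNorm (frobNorm u) 2 volume := by
  have h := eLpNorm_le_eLpNorm_fderiv_of_le (μ := volume) (F := EuclideanSpace ℝ (Fin 3))
    hu hsupp (p := 2) (q := 4) (by norm_num) (by simp; norm_num) (by simp; norm_num) hD
  have h' : eLpNorm u 4 volume ≤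
      (eLpNormLESNormFDerivOfLeConst (EuclideanSpace ℝ (Fin 3)) volume D 2 4 : ℝ≥0∞) *
        eLpNorm (fderiv ℝ u) 2 volume := by
    convert h using 2 <;> norm_num
  refine h'.trans ?_
  gcongr
  refine eLpNorm_mono (fun x => ?_)
  rw [Real.norm_of_nonneg (frobNorm_nonneg u x)]
  exact fderiv_opNorm_le_frobNorm u x

end Aux

/-- Gradient bound for the trilinear form in three dimensions: for a bounded
measurable `D ⊆ ℝ³` there is `C > 0`, depending only on `D`, with
`|b*(u,v,w)| ≤ C ‖Du‖_{L²} ‖Dv‖_{L²} ‖Dw‖_{L²}` for all C¹ compactly supported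
vector fields supported in `D`. -/


theorem bstar_gradient_bound_3d
    (D : Set (EuclideanSpace ℝ (Fin 3)))
    (hD : Bornology.IsBounded D) (hDm : MeasurableSet D) :
    ∃ C > 0, ∀ u v w : EuclideanSpace ℝ (Fin 3) → EuclideanSpace ℝ (Fin 3),
      ContDiff ℝ 1 u → ContDiff ℝ 1 v → ContDiff ℝ 1 w →
      HasCompactSupport u → HasCompactSupport v → HasCompactSupport w →
      Function.support u ⊆ D → Function.support v ⊆ D → Function.support w ⊆ D →
      |bstar u v w| ≤ C * gradL2 u * gradL2 v * gradL2 w := by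
  classical
  set K : ℝ≥0 := eLpNormLESNormFDerivOfLeConst (EuclideanSpace ℝ (Fin 3)) volume D 2 4 with hK
  refine ⟨((K : ℝ) + 1) ^ 2, by positivity, ?_⟩
  intro u v w hu hv hw hcu hcv hcw hsu hsv hsw
  set Gu := eLpNorm (frobNorm u) 2 volume with hGu'
  set Gv := eLpNorm (frobNorm v) 2 volume with hGv'
  set Gw := eLpNorm (frobNorm w) 2 volume with hGw'
  have hGu : Gu ≠ ∞ :=
    (((frobNorm_continuous hu).memLp_of_hasCompactSupport
      (frobNorm_hasCompactSupport hcu)).eLpNorm_lt_top).ne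
  have hGv : Gv ≠ ∞ :=
    (((frobNorm_continuous hv).memLp_of_hasCompactSupport
      (frobNorm_hasCompactSupport hcv)).eLpNorm_lt_top).ne
  have hGw : Gw ≠ ∞ :=
    (((frobNorm_continuous hw).memLp_of_hasCompactSupport
      (frobNorm_hasCompactSupport hcw)).eLpNorm_lt_top).ne
  have Su := sobolev_step D hD hu hsu
  have Sv := sobolev_step D hD hv hsv
  have Sw := sobolev_step D hD hw hsw
  set X : ℝ≥0∞ := ((K : ℝ≥0∞) * Gu) * Gv * ((K : ℝ≥0∞) * Gw) with hX'
  have hX : X ≠ ∞ := by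
    rw [hX']
    exact ENNReal.mul_ne_top (ENNReal.mul_ne_top
      (ENNReal.mul_ne_top ENNReal.coe_ne_top hGu) hGv)
      (ENNReal.mul_ne_top ENNReal.coe_ne_top hGw)
  have b1 : ENNReal.ofReal |l2inner (convTerm u v) w| ≤ X := by
    refine (core_estimate hu hv hw).trans ?_
    rw [hX']
    exact mul_le_mul' (mul_le_mul' Su le_rfl) Sw
  have b2 : ENNReal.ofReal |l2inner (convTerm u w) v| ≤ X := by
    refine (core_estimate hu hw hv).trans ?_
    have : X = ((K : ℝ≥0∞) * Gu) * Gw * ((K : ℝ≥0∞) * Gv) := by rw [hX']; ring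
    rw [this]
    exact mul_le_mul' (mul_le_mul' Su le_rfl) Sv
  have b1' : |l2inner (convTerm u v) w| ≤ X.toReal :=
    (ENNReal.ofReal_le_iff_le_toReal hX).mp b1
  have b2' : |l2inner (convTerm u w) v| ≤ X.toReal :=
    (ENNReal.ofReal_le_iff_le_toReal hX).mp b2
  have hb : |bstar u v w| ≤ X.toReal := by
    rw [bstar]
    calc |1 / 2 * l2inner (convTerm u v) w - 1 / 2 * l2inner (convTerm u w) v|
        ≤ |1 / 2 * l2inner (convTerm u v) w| + |1 / 2 * l2inner (convTerm u w) v| :=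
          abs_sub _ _
      _ = 1 / 2 * |l2inner (convTerm u v) w| + 1 / 2 * |l2inner (convTerm u w) v| := by
          rw [abs_mul, abs_mul, abs_of_pos (by norm_num : (0:ℝ) < 1/2)]
      _ ≤ 1 / 2 * X.toReal + 1 / 2 * X.toReal := by gcongr
      _ = X.toReal := by ring
  refine hb.trans ?_
  have hXval : X.toReal = ((K : ℝ) * (K : ℝ)) * (gradL2 u * gradL2 v * gradL2 w) := by
    rw [hX']
    rw [ENNReal.toReal_mul, ENNReal.toReal_mul, ENNReal.toReal_mul, ENNReal.toReal_mul]
    simp only [ENNReal.coe_toReal]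
    rw [gradL2, gradL2, gradL2]
    rw [← hGu', ← hGv', ← hGw']
    ring
  rw [hXval]
  have hKK : (K : ℝ) * (K : ℝ) ≤ ((K : ℝ) + 1) ^ 2 := by nlinarith [K.coe_nonneg]
  have hg : (0:ℝ) ≤ gradL2 u * gradL2 v * gradL2 w := by
    unfold gradL2; positivity
  calc ((K : ℝ) * (K : ℝ)) * (gradL2 u * gradL2 v * gradL2 w)
      ≤ ((K : ℝ) + 1) ^ 2 * (gradL2 u * gradL2 v * gradL2 w) := by gcongr
    _ = ((K : ℝ) + 1) ^ 2 * gradL2 u * gradL2 v * gradL2 w := by ring
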